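/- Pathwise superhedging inequality H^IV: let 0 < K₂ < b̲ < S_0 < b̄ < K₁ and define α₁ = 1/(K₁−b̲), α₂ = 1/(b̄−K₂), α₃ = ((K₁−b̲)−(b̄−K₂))/((K₁−b̲)(b̄−K₂)), α₄ = (b̲b̄−K₁K₂)/((K₁−b̲)(b̄−K₂)) + α₃S_0, β₁ = β₄ = 1/(b̄−K₂), β₂ = β₃ = 1/(K₁−b̲). Then for any continuous path S with hitting times H_x = inf{t : S_t = x}, 1{S̄_T ≥ b̄, S̲_T ≤ b̲} ≤ α₁(S_T−K₁)^+ + α₂(K₂−S_T)^+ + α₃(S_T−S_0) + α₄ − β₁(S_T−b̄)1{H_b̄ < H_b̲ ∧ T} + β₂(S_T−b̲)1{H_b̲ < H_b̄ ∧ T} + β₃(S_T−b̲)1{H_b̄ < H_b̲ ≤ T} − β₄(S_T−b̄)1{H_b̲ < H_b̄ ≤ T}. -/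
import Mathlib


open Set
open scoped Classical ENNReal

/-- First hitting time of level `x` by the path `S` on `[0,T]`
(`∞` if the level is never hit). -/
noncomputable def hitTime (S : ℝ → ℝ) (T x : ℝ) : ℝ≥0∞ :=
  ⨅ (t : {t : ℝ // t ∈ Set.Icc 0 T ∧ S t = x}), ENNReal.ofReal t.1

lemma hitTime_eq_top {S : ℝ → ℝ} {T x : ℝ} (h : ∀ t ∈ Set.Icc 0 T, S t ≠ x) :
    hitTime S T x = ⊤ := by
  have : IsEmpty {t : ℝ // t ∈ Set.Icc 0 T ∧ S t = x} :=
    ⟨fun t => h t.1 t.2.1 t.2.2⟩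
  simp [hitTime]

lemma hitTime_spec {S : ℝ → ℝ} {T x : ℝ} (hcont : ContinuousOn S (Set.Icc 0 T))
    (h : ∃ t ∈ Set.Icc 0 T, S t = x) :
    ∃ t₀, t₀ ∈ Set.Icc 0 T ∧ S t₀ = x ∧ hitTime S T x = ENNReal.ofReal t₀ ∧
      ∀ t ∈ Set.Icc 0 T, S t = x → t₀ ≤ t := by
  have hA_closed : IsClosed (Set.Icc 0 T ∩ S ⁻¹' {x}) :=
    hcont.preimage_isClosed_of_isClosed isClosed_Icc isClosed_singleton
  obtain ⟨t, ht, hst⟩ := h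
  have hA_ne : (Set.Icc 0 T ∩ S ⁻¹' {x}).Nonempty := ⟨t, ht, by simp [hst]⟩
  have hbdd : BddBelow (Set.Icc 0 T ∩ S ⁻¹' {x}) := ⟨0, fun s hs => hs.1.1⟩
  have ht₀ := hA_closed.csInf_mem hA_ne hbdd
  refine ⟨sInf (Set.Icc 0 T ∩ S ⁻¹' {x}), ht₀.1, ht₀.2, ?_,
    fun s hs hsx => csInf_le hbdd ⟨hs, by simp [hsx]⟩⟩
  apply le_antisymm
  · exact iInf_le_of_le ⟨_, ht₀.1, ht₀.2⟩ le_rfl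
  · exact le_iInf fun s => ENNReal.ofReal_le_ofReal (csInf_le hbdd ⟨s.2.1, by simp [s.2.2]⟩)

lemma stay_below {S : ℝ → ℝ} {T ub : ℝ} (hcont : ContinuousOn S (Set.Icc 0 T))
    (h0 : S 0 < ub) (h : ∀ t ∈ Set.Icc 0 T, S t ≠ ub) :
    ∀ t ∈ Set.Icc 0 T, S t < ub := by
  intro t ht
  by_contra hge
  push_neg at hge
  have hsub : Set.Icc (0:ℝ) t ⊆ Set.Icc 0 T := Set.Icc_subset_Icc le_rfl ht.2
  have him : ub ∈ S '' Set.Icc 0 t :=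
    intermediate_value_Icc ht.1 (hcont.mono hsub) ⟨h0.le, hge⟩
  obtain ⟨s, hs, hsx⟩ := him
  exact h s (hsub hs) hsx

lemma stay_above {S : ℝ → ℝ} {T lb : ℝ} (hcont : ContinuousOn S (Set.Icc 0 T))
    (h0 : lb < S 0) (h : ∀ t ∈ Set.Icc 0 T, S t ≠ lb) :
    ∀ t ∈ Set.Icc 0 T, lb < S t := by
  intro t ht
  by_contra hge
  push_neg at hge
  have hsub : Set.Icc (0:ℝ) t ⊆ Set.Icc 0 T := Set.Icc_subset_Icc le_rfl ht.2
  have him : lb ∈ S '' Set.Icc 0 t :=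
    intermediate_value_Icc' ht.1 (hcont.mono hsub) ⟨hge, h0.le⟩
  obtain ⟨s, hs, hsx⟩ := him
  exact h s (hsub hs) hsx

lemma arith_none (K₁ K₂ lb ub s0 x : ℝ)
    (h1 : K₂ < lb) (h4 : ub < K₁) (hlu : lb < ub) (hx1 : lb ≤ x) (hx2 : x ≤ ub) :
    0 ≤ (1 / (K₁ - lb)) * max (x - K₁) 0
        + (1 / (ub - K₂)) * max (K₂ - x) 0
        + (((K₁ - lb) - (ub - K₂)) / ((K₁ - lb) * (ub - K₂))) * (x - s0)
        + ((lb * ub - K₁ * K₂) / ((K₁ - lb) * (ub - K₂))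
            + (((K₁ - lb) - (ub - K₂)) / ((K₁ - lb) * (ub - K₂))) * s0) := by
  have ha : (0:ℝ) < K₁ - lb := by linarith
  have hc : (0:ℝ) < ub - K₂ := by linarith
  have key : 0 ≤ ((K₁ - lb) - (ub - K₂)) * x + (lb * ub - K₁ * K₂) := by
    nlinarith [mul_nonneg (mul_nonneg (sub_nonneg.2 hx2) ha.le) (by linarith : (0:ℝ) ≤ lb - K₂),
      mul_nonneg (mul_nonneg (sub_nonneg.2 hx1) (by linarith : (0:ℝ) ≤ K₁ - ub)) hc.le]
  have hm1 : (0:ℝ) ≤ max (x - K₁) 0 := le_max_right _ _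
  have hm2 : (0:ℝ) ≤ max (K₂ - x) 0 := le_max_right _ _
  have e : (1 / (K₁ - lb)) * max (x - K₁) 0
        + (1 / (ub - K₂)) * max (K₂ - x) 0
        + (((K₁ - lb) - (ub - K₂)) / ((K₁ - lb) * (ub - K₂))) * (x - s0)
        + ((lb * ub - K₁ * K₂) / ((K₁ - lb) * (ub - K₂))
            + (((K₁ - lb) - (ub - K₂)) / ((K₁ - lb) * (ub - K₂))) * s0)
      = max (x - K₁) 0 / (K₁ - lb) + max (K₂ - x) 0 / (ub - K₂)
        + (((K₁ - lb) - (ub - K₂)) * x + (lb * ub - K₁ * K₂)) / ((K₁ - lb) * (ub - K₂)) := by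
    field_simp
    ring
  rw [e]
  have := div_nonneg hm1 ha.le
  have := div_nonneg hm2 hc.le
  have := div_nonneg key (mul_pos ha hc).le
  linarith

lemma arith_ub (K₁ K₂ lb ub s0 x : ℝ)
    (h1 : K₂ < lb) (h4 : ub < K₁) (hlu : lb < ub) :
    0 ≤ (1 / (K₁ - lb)) * max (x - K₁) 0
        + (1 / (ub - K₂)) * max (K₂ - x) 0
        + (((K₁ - lb) - (ub - K₂)) / ((K₁ - lb) * (ub - K₂))) * (x - s0)
        + ((lb * ub - K₁ * K₂) / ((K₁ - lb) * (ub - K₂))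
            + (((K₁ - lb) - (ub - K₂)) / ((K₁ - lb) * (ub - K₂))) * s0)
        - (1 / (ub - K₂)) * (x - ub) := by
  have ha : (0:ℝ) < K₁ - lb := by linarith
  have hc : (0:ℝ) < ub - K₂ := by linarith
  have hm1 : x - K₁ ≤ max (x - K₁) 0 := le_max_left _ _
  have hm2 : (0:ℝ) ≤ max (K₂ - x) 0 := le_max_right _ _
  have e : (1 / (K₁ - lb)) * max (x - K₁) 0
        + (1 / (ub - K₂)) * max (K₂ - x) 0
        + (((K₁ - lb) - (ub - K₂)) / ((K₁ - lb) * (ub - K₂))) * (x - s0)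
        + ((lb * ub - K₁ * K₂) / ((K₁ - lb) * (ub - K₂))
            + (((K₁ - lb) - (ub - K₂)) / ((K₁ - lb) * (ub - K₂))) * s0)
        - (1 / (ub - K₂)) * (x - ub)
      = (max (x - K₁) 0 + (K₁ - x)) / (K₁ - lb) + max (K₂ - x) 0 / (ub - K₂) := by
    field_simp
    ring
  rw [e]
  have := div_nonneg (by linarith : (0:ℝ) ≤ max (x - K₁) 0 + (K₁ - x)) ha.le
  have := div_nonneg hm2 hc.le
  linarith

lemma arith_lb (K₁ K₂ lb ub s0 x : ℝ)
    (h1 : K₂ < lb) (h4 : ub < K₁) (hlu : lb < ub) :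
    0 ≤ (1 / (K₁ - lb)) * max (x - K₁) 0
        + (1 / (ub - K₂)) * max (K₂ - x) 0
        + (((K₁ - lb) - (ub - K₂)) / ((K₁ - lb) * (ub - K₂))) * (x - s0)
        + ((lb * ub - K₁ * K₂) / ((K₁ - lb) * (ub - K₂))
            + (((K₁ - lb) - (ub - K₂)) / ((K₁ - lb) * (ub - K₂))) * s0)
        + (1 / (K₁ - lb)) * (x - lb) := by
  have ha : (0:ℝ) < K₁ - lb := by linarith
  have hc : (0:ℝ) < ub - K₂ := by linarith
  have hm1 : (0:ℝ) ≤ max (x - K₁) 0 := le_max_right _ _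
  have hm2 : K₂ - x ≤ max (K₂ - x) 0 := le_max_left _ _
  have e : (1 / (K₁ - lb)) * max (x - K₁) 0
        + (1 / (ub - K₂)) * max (K₂ - x) 0
        + (((K₁ - lb) - (ub - K₂)) / ((K₁ - lb) * (ub - K₂))) * (x - s0)
        + ((lb * ub - K₁ * K₂) / ((K₁ - lb) * (ub - K₂))
            + (((K₁ - lb) - (ub - K₂)) / ((K₁ - lb) * (ub - K₂))) * s0)
        + (1 / (K₁ - lb)) * (x - lb)
      = max (x - K₁) 0 / (K₁ - lb) + (max (K₂ - x) 0 + (x - K₂)) / (ub - K₂) := by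
    field_simp
    ring
  rw [e]
  have := div_nonneg hm1 ha.le
  have := div_nonneg (by linarith : (0:ℝ) ≤ max (K₂ - x) 0 + (x - K₂)) hc.le
  linarith

lemma arith_both (K₁ K₂ lb ub s0 x : ℝ)
    (h1 : K₂ < lb) (h4 : ub < K₁) (hlu : lb < ub) :
    1 ≤ (1 / (K₁ - lb)) * max (x - K₁) 0
        + (1 / (ub - K₂)) * max (K₂ - x) 0
        + (((K₁ - lb) - (ub - K₂)) / ((K₁ - lb) * (ub - K₂))) * (x - s0)
        + ((lb * ub - K₁ * K₂) / ((K₁ - lb) * (ub - K₂))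
            + (((K₁ - lb) - (ub - K₂)) / ((K₁ - lb) * (ub - K₂))) * s0)
        - (1 / (ub - K₂)) * (x - ub)
        + (1 / (K₁ - lb)) * (x - lb) := by
  have ha : (0:ℝ) < K₁ - lb := by linarith
  have hc : (0:ℝ) < ub - K₂ := by linarith
  have hm1 : (0:ℝ) ≤ max (x - K₁) 0 := le_max_right _ _
  have hm2 : (0:ℝ) ≤ max (K₂ - x) 0 := le_max_right _ _
  have e : (1 / (K₁ - lb)) * max (x - K₁) 0
        + (1 / (ub - K₂)) * max (K₂ - x) 0
        + (((K₁ - lb) - (ub - K₂)) / ((K₁ - lb) * (ub - K₂))) * (x - s0)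
        + ((lb * ub - K₁ * K₂) / ((K₁ - lb) * (ub - K₂))
            + (((K₁ - lb) - (ub - K₂)) / ((K₁ - lb) * (ub - K₂))) * s0)
        - (1 / (ub - K₂)) * (x - ub)
        + (1 / (K₁ - lb)) * (x - lb)
      = max (x - K₁) 0 / (K₁ - lb) + max (K₂ - x) 0 / (ub - K₂) + 1 := by
    field_simp
    ring
  rw [e]
  have := div_nonneg hm1 ha.le
  have := div_nonneg hm2 hc.le
  linarith

/-- Pathwise superhedging inequality H^IV for the double touch option. -/
theorem stmt4 (T lb ub K₁ K₂ : ℝ) (S : ℝ → ℝ)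
    (hT : 0 < T) (hcont : ContinuousOn S (Set.Icc 0 T))
    (h0 : 0 < K₂) (h1 : K₂ < lb) (h2 : lb < S 0) (h3 : S 0 < ub) (h4 : ub < K₁) :
    (if ub ≤ sSup (S '' Set.Icc 0 T) ∧ sInf (S '' Set.Icc 0 T) ≤ lb
      then (1 : ℝ) else 0)
      ≤ (1 / (K₁ - lb)) * max (S T - K₁) 0
        + (1 / (ub - K₂)) * max (K₂ - S T) 0
        + (((K₁ - lb) - (ub - K₂)) / ((K₁ - lb) * (ub - K₂))) * (S T - S 0)
        + ((lb * ub - K₁ * K₂) / ((K₁ - lb) * (ub - K₂))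
            + (((K₁ - lb) - (ub - K₂)) / ((K₁ - lb) * (ub - K₂))) * S 0)
        - (1 / (ub - K₂)) * (S T - ub) *
          (if hitTime S T ub < min (hitTime S T lb) (ENNReal.ofReal T)
            then (1 : ℝ) else 0)
        + (1 / (K₁ - lb)) * (S T - lb) *
          (if hitTime S T lb < min (hitTime S T ub) (ENNReal.ofReal T)
            then (1 : ℝ) else 0)
        + (1 / (K₁ - lb)) * (S T - lb) *
          (if hitTime S T ub < hitTime S T lb ∧ hitTime S T lb ≤ ENNReal.ofReal T
            then (1 : ℝ) else 0)
        - (1 / (ub - K₂)) * (S T - ub) *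
          (if hitTime S T lb < hitTime S T ub ∧ hitTime S T ub ≤ ENNReal.ofReal T
            then (1 : ℝ) else 0) := by
  have hlu : lb < ub := h2.trans h3
  have hcomp : IsCompact (S '' Set.Icc 0 T) := isCompact_Icc.image_of_continuousOn hcont
  have hTmem : T ∈ Set.Icc (0:ℝ) T := ⟨hT.le, le_rfl⟩
  by_cases hub : ∃ t ∈ Set.Icc 0 T, S t = ub
  · by_cases hlb : ∃ t ∈ Set.Icc 0 T, S t = lb
    · -- both levels hit
      obtain ⟨tu, htu, hstu, hequ, hminu⟩ := hitTime_spec hcont hub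
      obtain ⟨tl, htl, hstl, heql, hminl⟩ := hitTime_spec hcont hlb
      have hI : ub ≤ sSup (S '' Set.Icc 0 T) ∧ sInf (S '' Set.Icc 0 T) ≤ lb :=
        ⟨hstu ▸ le_csSup hcomp.bddAbove (mem_image_of_mem S htu),
         hstl ▸ csInf_le hcomp.bddBelow (mem_image_of_mem S htl)⟩
      rw [if_pos hI, hequ, heql]
      have hne : tu ≠ tl := fun h => by rw [h, hstl] at hstu; linarith
      rcases hne.lt_or_gt with hlt | hlt
      · -- ub hit first
        have hA : ENNReal.ofReal tu < min (ENNReal.ofReal tl) (ENNReal.ofReal T) :=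
          lt_min ((ENNReal.ofReal_lt_ofReal_iff_of_nonneg htu.1).2 hlt)
            ((ENNReal.ofReal_lt_ofReal_iff_of_nonneg htu.1).2 (hlt.trans_le htl.2))
        have hB : ¬ ENNReal.ofReal tl < min (ENNReal.ofReal tu) (ENNReal.ofReal T) :=
          not_lt.2 ((min_le_left _ _).trans (ENNReal.ofReal_le_ofReal hlt.le))
        have hC : ENNReal.ofReal tu < ENNReal.ofReal tl ∧
            ENNReal.ofReal tl ≤ ENNReal.ofReal T :=
          ⟨(ENNReal.ofReal_lt_ofReal_iff_of_nonneg htu.1).2 hlt,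
            ENNReal.ofReal_le_ofReal htl.2⟩
        have hD : ¬ (ENNReal.ofReal tl < ENNReal.ofReal tu ∧
            ENNReal.ofReal tu ≤ ENNReal.ofReal T) := fun h =>
          absurd h.1 (not_lt.2 (ENNReal.ofReal_le_ofReal hlt.le))
        rw [if_pos hA, if_neg hB, if_pos hC, if_neg hD]
        simp only [mul_one, mul_zero, add_zero, sub_zero]
        linarith [arith_both K₁ K₂ lb ub (S 0) (S T) h1 h4 hlu]
      · -- lb hit first
        have hB : ENNReal.ofReal tl < min (ENNReal.ofReal tu) (ENNReal.ofReal T) :=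
          lt_min ((ENNReal.ofReal_lt_ofReal_iff_of_nonneg htl.1).2 hlt)
            ((ENNReal.ofReal_lt_ofReal_iff_of_nonneg htl.1).2 (hlt.trans_le htu.2))
        have hA : ¬ ENNReal.ofReal tu < min (ENNReal.ofReal tl) (ENNReal.ofReal T) :=
          not_lt.2 ((min_le_left _ _).trans (ENNReal.ofReal_le_ofReal hlt.le))
        have hD : ENNReal.ofReal tl < ENNReal.ofReal tu ∧
            ENNReal.ofReal tu ≤ ENNReal.ofReal T :=
          ⟨(ENNReal.ofReal_lt_ofReal_iff_of_nonneg htl.1).2 hlt,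
            ENNReal.ofReal_le_ofReal htu.2⟩
        have hC : ¬ (ENNReal.ofReal tu < ENNReal.ofReal tl ∧
            ENNReal.ofReal tl ≤ ENNReal.ofReal T) := fun h =>
          absurd h.1 (not_lt.2 (ENNReal.ofReal_le_ofReal hlt.le))
        rw [if_neg hA, if_pos hB, if_neg hC, if_pos hD]
        simp only [mul_one, mul_zero, add_zero, sub_zero]
        linarith [arith_both K₁ K₂ lb ub (S 0) (S T) h1 h4 hlu]
    · -- ub hit, lb never hit
      push_neg at hlb
      obtain ⟨tu, htu, hstu, hequ, hminu⟩ := hitTime_spec hcont hub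
      have habove := stay_above hcont h2 hlb
      have hI : ¬ (ub ≤ sSup (S '' Set.Icc 0 T) ∧ sInf (S '' Set.Icc 0 T) ≤ lb) := by
        rintro ⟨-, hinf⟩
        obtain ⟨t, ht, hst⟩ := hcomp.sInf_mem ⟨S 0, mem_image_of_mem S ⟨le_rfl, hT.le⟩⟩
        have := habove t ht
        rw [hst] at this
        linarith
      have heql : hitTime S T lb = ⊤ := hitTime_eq_top hlb
      rw [if_neg hI, hequ, heql]
      have hB : ¬ (⊤ : ℝ≥0∞) < min (ENNReal.ofReal tu) (ENNReal.ofReal T) := not_top_lt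
      have hC : ¬ (ENNReal.ofReal tu < (⊤ : ℝ≥0∞) ∧ (⊤ : ℝ≥0∞) ≤ ENNReal.ofReal T) :=
        fun h => ENNReal.ofReal_ne_top (top_le_iff.1 h.2)
      have hD : ¬ ((⊤ : ℝ≥0∞) < ENNReal.ofReal tu ∧ ENNReal.ofReal tu ≤ ENNReal.ofReal T) :=
        fun h => not_top_lt h.1
      rw [if_neg hB, if_neg hC, if_neg hD]
      by_cases htuT : tu < T
      · have hA : ENNReal.ofReal tu < min (⊤ : ℝ≥0∞) (ENNReal.ofReal T) := by
          rw [min_eq_right le_top]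
          exact (ENNReal.ofReal_lt_ofReal_iff_of_nonneg htu.1).2 htuT
        rw [if_pos hA]
        simp only [mul_one, mul_zero, add_zero, sub_zero]
        linarith [arith_ub K₁ K₂ lb ub (S 0) (S T) h1 h4 hlu]
      · have htuT' : tu = T := le_antisymm htu.2 (not_lt.1 htuT)
        have hST : S T = ub := htuT' ▸ hstu
        have hA : ¬ ENNReal.ofReal tu < min (⊤ : ℝ≥0∞) (ENNReal.ofReal T) := by
          rw [min_eq_right le_top, htuT']
          exact lt_irrefl _
        rw [if_neg hA]
        simp only [mul_one, mul_zero, add_zero, sub_zero]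
        linarith [arith_none K₁ K₂ lb ub (S 0) (S T) h1 h4 hlu
          (by rw [hST]; exact hlu.le) (by rw [hST])]
  · by_cases hlb : ∃ t ∈ Set.Icc 0 T, S t = lb
    · -- lb hit, ub never hit
      push_neg at hub
      obtain ⟨tl, htl, hstl, heql, hminl⟩ := hitTime_spec hcont hlb
      have hbelow := stay_below hcont h3 hub
      have hI : ¬ (ub ≤ sSup (S '' Set.Icc 0 T) ∧ sInf (S '' Set.Icc 0 T) ≤ lb) := by
        rintro ⟨hsup, -⟩
        obtain ⟨t, ht, hst⟩ := hcomp.sSup_mem ⟨S 0, mem_image_of_mem S ⟨le_rfl, hT.le⟩⟩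
        have := hbelow t ht
        rw [hst] at this
        linarith
      have hequ : hitTime S T ub = ⊤ := hitTime_eq_top hub
      rw [if_neg hI, hequ, heql]
      have hA : ¬ (⊤ : ℝ≥0∞) < min (ENNReal.ofReal tl) (ENNReal.ofReal T) := not_top_lt
      have hC : ¬ ((⊤ : ℝ≥0∞) < ENNReal.ofReal tl ∧ ENNReal.ofReal tl ≤ ENNReal.ofReal T) :=
        fun h => not_top_lt h.1
      have hD : ¬ (ENNReal.ofReal tl < (⊤ : ℝ≥0∞) ∧ (⊤ : ℝ≥0∞) ≤ ENNReal.ofReal T) :=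
        fun h => ENNReal.ofReal_ne_top (top_le_iff.1 h.2)
      rw [if_neg hA, if_neg hC, if_neg hD]
      by_cases htlT : tl < T
      · have hB : ENNReal.ofReal tl < min (⊤ : ℝ≥0∞) (ENNReal.ofReal T) := by
          rw [min_eq_right le_top]
          exact (ENNReal.ofReal_lt_ofReal_iff_of_nonneg htl.1).2 htlT
        rw [if_pos hB]
        simp only [mul_one, mul_zero, add_zero, sub_zero]
        linarith [arith_lb K₁ K₂ lb ub (S 0) (S T) h1 h4 hlu]
      · have htlT' : tl = T := le_antisymm htl.2 (not_lt.1 htlT)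
        have hST : S T = lb := htlT' ▸ hstl
        have hB : ¬ ENNReal.ofReal tl < min (⊤ : ℝ≥0∞) (ENNReal.ofReal T) := by
          rw [min_eq_right le_top, htlT']
          exact lt_irrefl _
        rw [if_neg hB]
        simp only [mul_one, mul_zero, add_zero, sub_zero]
        linarith [arith_none K₁ K₂ lb ub (S 0) (S T) h1 h4 hlu
          (by rw [hST]) (by rw [hST]; exact hlu.le)]
    · -- neither level hit
      push_neg at hub; push_neg at hlb
      have habove := stay_above hcont h2 hlb
      have hbelow := stay_below hcont h3 hub
      have hI : ¬ (ub ≤ sSup (S '' Set.Icc 0 T) ∧ sInf (S '' Set.Icc 0 T) ≤ lb) := by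
        rintro ⟨hsup, -⟩
        obtain ⟨t, ht, hst⟩ := hcomp.sSup_mem ⟨S 0, mem_image_of_mem S ⟨le_rfl, hT.le⟩⟩
        have := hbelow t ht
        rw [hst] at this
        linarith
      have hequ : hitTime S T ub = ⊤ := hitTime_eq_top hub
      have heql : hitTime S T lb = ⊤ := hitTime_eq_top hlb
      rw [if_neg hI, hequ, heql]
      have hA : ¬ (⊤ : ℝ≥0∞) < min (⊤ : ℝ≥0∞) (ENNReal.ofReal T) := not_top_lt
      have hC : ¬ ((⊤ : ℝ≥0∞) < (⊤ : ℝ≥0∞) ∧ (⊤ : ℝ≥0∞) ≤ ENNReal.ofReal T) :=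
        fun h => lt_irrefl _ h.1
      rw [if_neg hA, if_neg hC]
      simp only [mul_one, mul_zero, add_zero, sub_zero]
      linarith [arith_none K₁ K₂ lb ub (S 0) (S T) h1 h4 hlu
        (habove T hTmem).le (hbelow T hTmem).le]
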